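/- Let C be a pointed monoidal category with finite colimits in which the tensor product preserves colimits in each variable. For morphisms f : X₀ → X₁ and g : Y₀ → Y₁, there is a natural isomorphism coker(f □ g) ≅ coker(f) ⊗ coker(g), where f □ g : (X₀ ⊗ Y₁) ⊔_{X₀ ⊗ Y₀} (X₁ ⊗ Y₀) → X₁ ⊗ Y₁ is the pushout-product. -/

import Mathlib

open CategoryTheory Limits MonoidalCategory

noncomputable section

universe v u

variable {C : Type u} [Category.{v} C] [MonoidalCategory C]
  [HasZeroObject C] [HasZeroMorphisms C] [HasFiniteColimits C]

/-- The pushout-product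
`f □ g : (X₀ ⊗ Y₁) ⊔_{X₀ ⊗ Y₀} (X₁ ⊗ Y₀) ⟶ X₁ ⊗ Y₁`. -/
def pushoutProduct {X₀ X₁ Y₀ Y₁ : C} (f : X₀ ⟶ X₁) (g : Y₀ ⟶ Y₁) :
    pushout (X₀ ◁ g) (f ▷ Y₀) ⟶ X₁ ⊗ Y₁ :=
  pushout.desc (f ▷ Y₁) (X₁ ◁ g) (whisker_exchange f g)

section Aux

set_option linter.unusedSectionVars false

variable {S A B T : C} (h : S ⟶ A) (k : S ⟶ B)
    (u : A ⟶ T) (v : B ⟶ T) (w : h ≫ u = k ≫ v)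

lemma aux_u_zero : u ≫ cokernel.π (pushout.desc u v w) = 0 :=
  (pushout.inl_desc_assoc u v w (cokernel.π (pushout.desc u v w))).symm.trans
    (by rw [cokernel.condition, comp_zero])

lemma aux_v_zero : v ≫ cokernel.π (pushout.desc u v w) = 0 :=
  (pushout.inr_desc_assoc u v w (cokernel.π (pushout.desc u v w))).symm.trans
    (by rw [cokernel.condition, comp_zero])

/-- The cokernel of `pushout.desc u v w` is the quotient of `T` by the images
of both `u` and `v`, which can be computed as the cokernel of the induced map
`v ≫ cokernel.π u`. -/
def auxIso : cokernel (pushout.desc u v w) ≅ cokernel (v ≫ cokernel.π u) where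
  hom := cokernel.desc _ (cokernel.π u ≫ cokernel.π (v ≫ cokernel.π u)) (by
    apply pushout.hom_ext
    · rw [pushout.inl_desc_assoc, ← Category.assoc, cokernel.condition]; simp
    · rw [pushout.inr_desc_assoc, ← Category.assoc, cokernel.condition]; simp)
  inv := cokernel.desc _ (cokernel.desc u (cokernel.π (pushout.desc u v w))
      (aux_u_zero h k u v w)) (by
    rw [Category.assoc, cokernel.π_desc]; exact aux_v_zero h k u v w)
  hom_inv_id := by ext; simp
  inv_hom_id := by ext; simp

end Aux

/-- in a pointed monoidal category with finite colimits in which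
the tensor product preserves colimits in each variable, there is a natural
isomorphism `coker(f □ g) ≅ coker f ⊗ coker g`. -/
theorem cokernel_pushoutProduct_iso
    [∀ X : C, PreservesFiniteColimits (tensorLeft X)]
    [∀ X : C, PreservesFiniteColimits (tensorRight X)]
    {X₀ X₁ Y₀ Y₁ : C} (f : X₀ ⟶ X₁) (g : Y₀ ⟶ Y₁) :
    Nonempty (cokernel (pushoutProduct f g) ≅ cokernel f ⊗ cokernel g) := by
  refine ⟨?_⟩
  have e1 : cokernel (pushoutProduct f g) ≅
      cokernel ((X₁ ◁ g) ≫ cokernel.π (f ▷ Y₁)) :=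
    auxIso (X₀ ◁ g) (f ▷ Y₀) (f ▷ Y₁) (X₁ ◁ g) (whisker_exchange f g)
  have hmap : (tensorRight Y₁).map f = f ▷ Y₁ := rfl
  haveI : HasCokernel ((tensorRight Y₁).map f) := by rw [hmap]; infer_instance
  have e2 : cokernel ((X₁ ◁ g) ≫ cokernel.π (f ▷ Y₁)) ≅
      cokernel ((cokernel.π f ▷ Y₀) ≫ (cokernel f ◁ g)) := by
    refine (cokernelCompIsIso ((X₁ ◁ g) ≫ cokernel.π (f ▷ Y₁))
      (cokernelComparison f (tensorRight Y₁))).symm ≪≫ cokernelIsoOfEq ?_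
    rw [Category.assoc]
    rw [show cokernel.π (f ▷ Y₁) ≫ cokernelComparison f (tensorRight Y₁)
        = cokernel.π f ▷ Y₁ from π_comp_cokernelComparison f (tensorRight Y₁)]
    exact whisker_exchange (cokernel.π f) g
  haveI : Epi (cokernel.π f ▷ Y₀) :=
    show Epi ((tensorRight Y₀).map (cokernel.π f)) from inferInstance
  have e3 : cokernel ((cokernel.π f ▷ Y₀) ≫ (cokernel f ◁ g)) ≅
      cokernel (cokernel f ◁ g) := cokernelEpiComp _ _
  have e4 : cokernel (cokernel f ◁ g) ≅ cokernel f ⊗ cokernel g :=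
    (PreservesCokernel.iso (tensorLeft (cokernel f)) g).symm
  exact e1 ≪≫ e2 ≪≫ e3 ≪≫ e4

end
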